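/- arXiv:2208.06897 — 2 statements merged into one kernel-verified Lean document; each statement's English description precedes it below -/
import Mathlib

section
/- The function v(x₁, x₂) = x₁^{4/3} − x₂^{4/3} is ∞-harmonic away from the coordinate axes: it satisfies Δ_∞ v = Σ_{i,j} ∂_i v · ∂_j v · ∂_{ij} v = 0 at every point (x₁, x₂) with x₁ > 0 and x₂ > 0. -/
open Real Filter

private lemma aronsson_deriv1 (c : ℝ) {x : ℝ} (hx : 0 < x) :
    deriv (fun t : ℝ => t ^ ((4 : ℝ) / 3) - c) x = (4 / 3) * x ^ ((4 : ℝ) / 3 - 1) := by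
  exact ((Real.hasDerivAt_rpow_const (x := x) (p := (4 : ℝ) / 3) (Or.inl hx.ne')).sub_const
    c).deriv

private lemma aronsson_deriv2 (c : ℝ) {x : ℝ} (hx : 0 < x) :
    deriv (fun t : ℝ => c - t ^ ((4 : ℝ) / 3)) x = -((4 / 3) * x ^ ((4 : ℝ) / 3 - 1)) := by
  exact ((Real.hasDerivAt_rpow_const (x := x) (p := (4 : ℝ) / 3) (Or.inl hx.ne')).const_sub
    c).deriv

/-- The Aronsson function `v(x₁,x₂) = x₁^(4/3) − x₂^(4/3)` is ∞-harmonic in the open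
    first quadrant: `(∂₁v)²∂₁₁v + 2(∂₁v)(∂₂v)∂₁₂v + (∂₂v)²∂₂₂v = 0` for `x₁, x₂ > 0`. -/
theorem aronsson_infinity_harmonic (x₁ x₂ : ℝ) (h₁ : 0 < x₁) (h₂ : 0 < x₂) :
    let v : ℝ → ℝ → ℝ := fun a b => a ^ ((4 : ℝ) / 3) - b ^ ((4 : ℝ) / 3)
    let d1 := deriv (fun t => v t x₂) x₁
    let d2 := deriv (fun t => v x₁ t) x₂
    let d11 := deriv (deriv (fun t => v t x₂)) x₁
    let d22 := deriv (deriv (fun t => v x₁ t)) x₂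
    let d12 := deriv (fun t => deriv (fun s => v s t) x₁) x₂
    d1 ^ 2 * d11 + 2 * d1 * d2 * d12 + d2 ^ 2 * d22 = 0 := by
  intro v d1 d2 d11 d22 d12
  have hd1 : d1 = (4 / 3) * x₁ ^ ((4 : ℝ) / 3 - 1) := aronsson_deriv1 _ h₁
  have hd2 : d2 = -((4 / 3) * x₂ ^ ((4 : ℝ) / 3 - 1)) := aronsson_deriv2 _ h₂
  have hd12 : d12 = 0 := by
    have : (fun t : ℝ => deriv (fun s => v s t) x₁) =
        fun _ : ℝ => (4 / 3) * x₁ ^ ((4 : ℝ) / 3 - 1) := by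
      funext t; exact aronsson_deriv1 _ h₁
    show deriv _ x₂ = 0
    rw [this, deriv_const]
  have hev1 : deriv (fun t => v t x₂) =ᶠ[nhds x₁]
      fun t => (4 / 3) * t ^ ((4 : ℝ) / 3 - 1) := by
    filter_upwards [isOpen_Ioi.mem_nhds h₁] with t ht using aronsson_deriv1 _ ht
  have hev2 : deriv (fun t => v x₁ t) =ᶠ[nhds x₂]
      fun t => -((4 / 3) * t ^ ((4 : ℝ) / 3 - 1)) := by
    filter_upwards [isOpen_Ioi.mem_nhds h₂] with t ht using aronsson_deriv2 _ ht
  have hd11 : d11 = (4 / 3) * (((4 : ℝ) / 3 - 1) * x₁ ^ ((4 : ℝ) / 3 - 1 - 1)) := by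
    show deriv _ x₁ = _
    rw [hev1.deriv_eq]
    exact (((Real.hasDerivAt_rpow_const (x := x₁) (p := (4 : ℝ) / 3 - 1)
      (Or.inl h₁.ne'))).const_mul (4 / 3)).deriv
  have hd22 : d22 = -((4 / 3) * (((4 : ℝ) / 3 - 1) * x₂ ^ ((4 : ℝ) / 3 - 1 - 1))) := by
    show deriv _ x₂ = _
    rw [hev2.deriv_eq]
    exact ((((Real.hasDerivAt_rpow_const (x := x₂) (p := (4 : ℝ) / 3 - 1)
      (Or.inl h₂.ne'))).const_mul (4 / 3)).neg).deriv
  have key : ∀ x : ℝ, 0 < x →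
      (x ^ ((4 : ℝ) / 3 - 1)) ^ 2 * x ^ ((4 : ℝ) / 3 - 1 - 1) = 1 := by
    intro x hx
    rw [← Real.rpow_natCast (x ^ ((4 : ℝ) / 3 - 1)) 2, ← Real.rpow_mul hx.le,
      ← Real.rpow_add hx]
    norm_num
  rw [hd1, hd2, hd11, hd12, hd22]
  have k1 := key x₁ h₁
  have k2 := key x₂ h₂
  ring_nf
  ring_nf at k1 k2
  nlinarith [k1, k2]
end

section
/- On the interval Ω = (0,1) with zero Dirichlet boundary conditions and constant source f = c > 0, the unique minimizer of u ↦ (1/p)∫₀¹|u'|^p dx − ∫₀¹ f·u dx over W₀^{1,p}(0,1) converges uniformly as p → ∞ to the distance function u_∞(x) = min(x, 1−x), independently of the value c > 0. -/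
open Real Filter

/-- For `t ∈ [0,1]` and `q ≥ 1`, `t - t^q ≤ q - 1`. -/
lemma key_sub_rpow {t q : ℝ} (ht0 : 0 ≤ t) (ht1 : t ≤ 1) (hq : 1 ≤ q) :
    t - t ^ q ≤ q - 1 := by
  rcases eq_or_lt_of_le ht0 with h | h
  · simp [← h, Real.zero_rpow (by linarith : q ≠ 0)]; linarith
  · have hlog : Real.log (1 / t) ≤ 1 / t - 1 :=
      Real.log_le_sub_one_of_pos (by positivity)
    have hlog' : -Real.log t ≤ 1 / t - 1 := by
      rwa [Real.log_div one_ne_zero (ne_of_gt h), Real.log_one, zero_sub] at hlog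
    have h1 : t ^ q = t * t ^ (q - 1) := by
      rw [show q = 1 + (q - 1) by ring, Real.rpow_add h, Real.rpow_one]
      ring_nf
    have h2 : t ^ (q - 1) = Real.exp (Real.log t * (q - 1)) :=
      Real.rpow_def_of_pos h _
    have h3 : 1 + (q - 1) * Real.log t ≤ t ^ (q - 1) := by
      rw [h2]
      linarith [Real.add_one_le_exp (Real.log t * (q - 1)),
        mul_comm (Real.log t) (q - 1)]
    -- t - t^q = t * (1 - t^(q-1)) ≤ t * (-(q-1) * log t) = (q-1) * (t * (-log t))
    have h4 : t - t ^ q ≤ (q - 1) * (t * (-Real.log t)) := by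
      rw [h1]; nlinarith [h3, h.le]
    have h5 : t * (-Real.log t) ≤ 1 - t := by
      have := mul_le_mul_of_nonneg_left hlog' h.le
      have ht : t * (1 / t - 1) = 1 - t := by field_simp
      linarith [this, ht.le]
    nlinarith [h4, h5, ht0]

/-- The 1D p-Laplace Dirichlet solutions with constant positive source `c`,
    `u_p(x) = ((p−1)/p)·c^(1/(p−1))·((1/2)^(p/(p−1)) − |x−1/2|^(p/(p−1)))`,
    each being the unique minimizer of `u ↦ (1/p)∫|u'|^p − ∫ c·u` over `W₀^{1,p}(0,1)`,
    converge uniformly on `[0,1]` as `p → ∞` to `u_∞(x) = min(x, 1−x)`,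
    independently of `c > 0`. -/
theorem one_d_p_laplace_limit (c : ℝ) (hc : 0 < c) :
    let u : ℝ → ℝ → ℝ := fun p x =>
      ((p - 1) / p) * c ^ (1 / (p - 1)) *
        ((1 / 2 : ℝ) ^ (p / (p - 1)) - |x - 1 / 2| ^ (p / (p - 1)))
    TendstoUniformlyOn u (fun x => min x (1 - x)) Filter.atTop (Set.Icc (0 : ℝ) 1) := by
  intro u
  rw [Metric.tendstoUniformlyOn_iff]
  intro ε hε
  have h3 : Tendsto (fun p : ℝ => 1 / (p - 1)) atTop (nhds 0) := by
    have ha : Tendsto (fun p : ℝ => p - 1) atTop atTop :=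
      tendsto_atTop_add_const_right atTop (-1) tendsto_id
    have hb : Tendsto (fun r : ℝ => r⁻¹) atTop (nhds 0) := tendsto_inv_atTop_zero
    simpa [one_div, Function.comp_def] using hb.comp ha
  have h1 : Tendsto (fun p : ℝ => (p - 1) / p) atTop (nhds 1) := by
    have : Tendsto (fun p : ℝ => 1 - 1 / p) atTop (nhds 1) := by
      have hb : Tendsto (fun r : ℝ => r⁻¹) atTop (nhds 0) := tendsto_inv_atTop_zero
      simpa [one_div] using (tendsto_const_nhds (x := (1:ℝ))).sub hb
    refine this.congr' ?_
    filter_upwards [eventually_gt_atTop (0 : ℝ)] with p hp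
    field_simp
  have h2 : Tendsto (fun p : ℝ => c ^ (1 / (p - 1))) atTop (nhds 1) := by
    have hcont : ContinuousAt (fun y : ℝ => c ^ y) 0 :=
      Real.continuousAt_const_rpow hc.ne'
    have := hcont.tendsto.comp h3
    simpa [Real.rpow_zero, Function.comp_def] using this
  have hb : Tendsto (fun p : ℝ => |(p - 1) / p * c ^ (1 / (p - 1)) - 1| + 2 * (1 / (p - 1)))
      atTop (nhds 0) := by
    have := ((h1.mul h2).sub (tendsto_const_nhds (x := (1:ℝ)))).abs.add (h3.const_mul 2)
    simpa using this
  filter_upwards [hb.eventually (gt_mem_nhds hε), eventually_ge_atTop (2 : ℝ)] with p hbp hp2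
  intro x hx
  obtain ⟨hx0, hx1⟩ := hx
  set q : ℝ := p / (p - 1) with hqdef
  set t : ℝ := |x - 1/2| with htdef
  have hp1 : (1 : ℝ) ≤ p - 1 := by linarith
  have hq1 : 1 ≤ q := by
    rw [hqdef, le_div_iff₀ (by linarith)]; linarith
  have hqsub : q - 1 = 1 / (p - 1) := by
    rw [hqdef]; field_simp; ring
  have ht0 : 0 ≤ t := abs_nonneg _
  have ht1 : t ≤ 1/2 := by
    rw [htdef, abs_le]; constructor <;> linarith
  have hmin : min x (1 - x) = 1/2 - t := by
    rcases le_total x (1/2) with h | h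
    · rw [htdef, abs_of_nonpos (by linarith), min_eq_left (by linarith)]; ring
    · rw [htdef, abs_of_nonneg (by linarith), min_eq_right (by linarith)]; ring
  have hA : 0 ≤ (1/2 : ℝ) ^ q - t ^ q :=
    sub_nonneg.2 (Real.rpow_le_rpow ht0 ht1 (by linarith))
  have hA1 : (1/2 : ℝ) ^ q ≤ 1 :=
    Real.rpow_le_one (by norm_num) (by norm_num) (by linarith)
  have hB : 1/2 - (1/2 : ℝ) ^ q ≤ q - 1 :=
    key_sub_rpow (by norm_num) (by norm_num) hq1
  have hB0 : (1/2 : ℝ) ^ q ≤ 1/2 := by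
    have := Real.rpow_le_rpow_of_exponent_ge (by norm_num : (0:ℝ) < 1/2)
      (by norm_num : (1/2 : ℝ) ≤ 1) hq1
    simpa [Real.rpow_one] using this
  have hC : t - t ^ q ≤ q - 1 := key_sub_rpow ht0 (by linarith) hq1
  have hC0 : t ^ q ≤ t := by
    rcases eq_or_lt_of_le ht0 with h | h
    · simp [← h, Real.zero_rpow (by linarith : q ≠ 0)]
    · have := Real.rpow_le_rpow_of_exponent_ge h (by linarith) hq1
      simpa [Real.rpow_one] using this
  set a : ℝ := (p - 1) / p * c ^ (1 / (p - 1)) with hadef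
  have hdist : dist (min x (1 - x)) (u p x) ≤ |a - 1| + (q - 1) := by
    have hux : u p x = a * ((1/2 : ℝ) ^ q - t ^ q) := rfl
    rw [Real.dist_eq, hmin, hux]
    have hexpand : (1/2 - t) - a * ((1/2 : ℝ) ^ q - t ^ q)
        = -((a - 1) * ((1/2 : ℝ) ^ q - t ^ q)) + ((1/2 - (1/2 : ℝ) ^ q) - (t - t ^ q)) := by
      ring
    rw [hexpand]
    calc |-((a - 1) * ((1/2 : ℝ) ^ q - t ^ q)) + ((1/2 - (1/2 : ℝ) ^ q) - (t - t ^ q))|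
        ≤ |(a - 1) * ((1/2 : ℝ) ^ q - t ^ q)| + |(1/2 - (1/2 : ℝ) ^ q) - (t - t ^ q)| := by
          exact (abs_add_le _ _).trans (by rw [abs_neg])
      _ ≤ |a - 1| * 1 + (q - 1) := by
          gcongr
          · rw [abs_mul, abs_of_nonneg hA]
            have : (1/2 : ℝ) ^ q - t ^ q ≤ 1 := by
              have : (0:ℝ) ≤ t ^ q := Real.rpow_nonneg ht0 q
              linarith
            exact mul_le_mul_of_nonneg_left this (abs_nonneg _)
          · rw [abs_le]
            constructor <;> linarith
      _ = |a - 1| + (q - 1) := by ring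
  have : |a - 1| + (q - 1) ≤ |a - 1| + 2 * (1 / (p - 1)) := by
    rw [← hqsub]; linarith [hqsub ▸ (by positivity : (0:ℝ) ≤ 1 / (p-1))]
  linarith [hdist, hbp]
end
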